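/- Let n ≡ 2 (mod 4) and let (T_0, T_1) be an extended 1-perfect trade of length n. Then T_0 = T_1 + 1^n, where T_1 + 1^n = {x + 1^n : x ∈ T_1} and 1^n is the all-one word of length n; that is, the two trade mates are complements of each other. -/

import Mathlib

/-- An extended 1-perfect trade of length `n`: a pair of disjoint nonempty sets of
even-weight binary words such that for every odd-weight word `x`, the sphere of
radius 1 around `x` contains equally many (0 or 1) elements of each set. -/
def IsExtTrade {n : ℕ} (T₀ T₁ : Finset (Fin n → ZMod 2)) : Prop :=
  T₀.Nonempty ∧ T₁.Nonempty ∧ Disjoint T₀ T₁ ∧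
  (∀ x ∈ T₀ ∪ T₁, Even (hammingNorm x)) ∧
  ∀ x : Fin n → ZMod 2, Odd (hammingNorm x) →
    (T₀.filter fun y => hammingDist x y = 1).card =
      (T₁.filter fun y => hammingDist x y = 1).card ∧
    (T₀.filter fun y => hammingDist x y = 1).card ≤ 1

namespace Stmt4Aux
open Finset
variable {n : ℕ}


def ee : ZMod 2 → ℤ := fun a => if a = 1 then -1 else 1

lemma ee_add (a b : ZMod 2) : ee (a + b) = ee a * ee b := by revert a b; decide

lemma ee_zero : ee 0 = 1 := by decide

lemma zmod2_ne_zero {a : ZMod 2} (h : a ≠ 0) : a = 1 := by revert h; revert a; decide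

def chi (c x : Fin n → ZMod 2) : ℤ := ∏ i, ee (c i * x i)

lemma chi_comm (c x : Fin n → ZMod 2) : chi c x = chi x c := by
  simp [chi, mul_comm]

lemma chi_add_right (c x y : Fin n → ZMod 2) : chi c (x + y) = chi c x * chi c y := by
  unfold chi
  rw [← Finset.prod_mul_distrib]
  refine Finset.prod_congr rfl fun i _ => ?_
  rw [Pi.add_apply, mul_add, ee_add]

lemma chi_single (c : Fin n → ZMod 2) (i : Fin n) :
    chi c (Pi.single i 1) = ee (c i) := by
  unfold chi
  rw [Finset.prod_eq_single i]
  · simp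
  · intro j _ hj
    simp [Pi.single_eq_of_ne hj, ee_zero]
  · simp

lemma sum_chi (c : Fin n → ZMod 2) : ∑ x, chi c x = if c = 0 then 2 ^ n else 0 := by
  split_ifs with h
  · subst h
    have h1 : ∀ x : Fin n → ZMod 2, chi 0 x = 1 := by
      intro x; unfold chi; simp [ee_zero]
    simp only [h1, Finset.sum_const, Finset.card_univ]
    simp
  · obtain ⟨i, hi⟩ : ∃ i, c i ≠ 0 := by
      by_contra hc; push_neg at hc; exact h (funext hc)
    have hci : c i = 1 := zmod2_ne_zero hi
    set e : Fin n → ZMod 2 := Pi.single i 1 with he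
    have hrei : ∑ x, chi c (x + e) = ∑ x, chi c x :=
      Fintype.sum_equiv (Equiv.addRight e) _ _ (fun x => rfl)
    have hneg : ∀ x : Fin n → ZMod 2, chi c (x + e) = - chi c x := by
      intro x
      rw [chi_add_right, he, chi_single, hci]
      simp [ee]
    rw [Finset.sum_congr rfl (fun x _ => hneg x), Finset.sum_neg_distrib] at hrei
    linarith [hrei]







lemma sum_ee (c : Fin n → ZMod 2) : ∑ i, ee (c i) = (n : ℤ) - 2 * (hammingNorm c : ℤ) := by
  have h1 : ∀ i : Fin n, ee (c i) = 1 - 2 * (if c i ≠ 0 then (1:ℤ) else 0) := by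
    intro i
    by_cases h : c i = 0
    · have : c i ≠ 1 := by rw [h]; decide
      simp [ee, h, this]
    · simp [ee, zmod2_ne_zero h, h]
  rw [Finset.sum_congr rfl (fun i _ => h1 i), Finset.sum_sub_distrib, ← Finset.mul_sum,
    Finset.sum_boole]
  simp [hammingNorm]

lemma prod_ee (c : Fin n → ZMod 2) : ∏ i, ee (c i) = (-1) ^ (hammingNorm c) := by
  rw [← Finset.prod_filter_mul_prod_filter_not univ (fun i => c i ≠ 0)]
  have h1 : ∏ i ∈ univ.filter (fun i => c i ≠ 0), ee (c i)
      = ∏ _i ∈ univ.filter (fun i => c i ≠ 0), (-1 : ℤ) := by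
    refine Finset.prod_congr rfl fun i hi => ?_
    rw [mem_filter] at hi
    simp [ee, zmod2_ne_zero hi.2]
  have h2 : ∏ i ∈ univ.filter (fun i => ¬ c i ≠ 0), ee (c i) = 1 := by
    refine Finset.prod_eq_one fun i hi => ?_
    rw [mem_filter] at hi
    push_neg at hi
    have : c i ≠ 1 := by rw [hi.2]; decide
    simp [ee, this]
  rw [h1, h2, Finset.prod_const, mul_one, hammingNorm]




def fhat (f : (Fin n → ZMod 2) → ℤ) (c : Fin n → ZMod 2) : ℤ := ∑ x, f x * chi c x


lemma add_self (x : Fin n → ZMod 2) : x + x = 0 := by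
  funext i
  have h : ∀ a : ZMod 2, a + a = 0 := by decide
  exact h (x i)

lemma add_eq_zero_iff {x y : Fin n → ZMod 2} : x + y = 0 ↔ x = y := by
  constructor
  · intro h
    have : x + y + y = y := by rw [h, zero_add]
    rwa [add_assoc, add_self, add_zero] at this
  · intro h; rw [h, add_self]

lemma inversion (f : (Fin n → ZMod 2) → ℤ) (x : Fin n → ZMod 2) :
    ∑ c, fhat f c * chi c x = 2 ^ n * f x := by
  unfold fhat
  simp_rw [Finset.sum_mul]
  rw [Finset.sum_comm]
  have h1 : ∀ y : Fin n → ZMod 2, ∑ c, f y * chi c y * chi c x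
      = f y * (if y + x = 0 then (2:ℤ) ^ n else 0) := by
    intro y
    simp_rw [mul_assoc, ← Finset.mul_sum, ← chi_add_right]
    congr 1
    calc ∑ c, chi c (y + x) = ∑ c, chi (y + x) c := by simp_rw [chi_comm]
      _ = _ := sum_chi (y + x)
  rw [Finset.sum_congr rfl fun y _ => h1 y]
  simp_rw [add_eq_zero_iff, mul_ite, mul_zero]
  rw [Finset.sum_ite_eq' univ x (fun y => f y * 2 ^ n)]
  simp [mul_comm]


lemma fhat_eigen (f : (Fin n → ZMod 2) → ℤ)
    (hf : ∀ x, ∑ i, f (x + (Pi.single i 1 : Fin n → ZMod 2)) = 0) (c : Fin n → ZMod 2) :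
    ((n : ℤ) - 2 * (hammingNorm c : ℤ)) * fhat f c = 0 := by
  have h0 : ∑ x, (∑ i, f (x + (Pi.single i 1 : Fin n → ZMod 2))) * chi c x = 0 := by
    simp [hf]
  rw [show (∑ x, (∑ i, f (x + (Pi.single i 1 : Fin n → ZMod 2))) * chi c x)
      = ∑ i, ∑ x, f (x + (Pi.single i 1 : Fin n → ZMod 2)) * chi c x by
    simp_rw [Finset.sum_mul]; exact Finset.sum_comm] at h0
  have h1 : ∀ i : Fin n, ∑ x, f (x + (Pi.single i 1 : Fin n → ZMod 2)) * chi c x = ee (c i) * fhat f c := by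
    intro i
    set e : Fin n → ZMod 2 := Pi.single i 1 with he
    have hre : ∑ y, f y * chi c (y + e) = ∑ x, f (x + e) * chi c x := by
      refine Fintype.sum_equiv (Equiv.addRight e) _ _ fun y => ?_
      simp only [Equiv.coe_addRight]
      rw [add_assoc, add_self, add_zero]
    rw [← hre]
    simp_rw [chi_add_right, he, chi_single, ← mul_assoc]
    rw [← Finset.sum_mul, mul_comm]
    rfl
  rw [Finset.sum_congr rfl fun i _ => h1 i, ← Finset.sum_mul, sum_ee] at h0
  exact h0

lemma harmonic_neg (hn : n % 4 = 2) (f : (Fin n → ZMod 2) → ℤ)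
    (hf : ∀ x, ∑ i, f (x + (Pi.single i 1 : Fin n → ZMod 2)) = 0) (x : Fin n → ZMod 2) :
    f (x + fun _ => (1 : ZMod 2)) = - f x := by
  set ones : Fin n → ZMod 2 := fun _ => 1 with ho
  have key : ∀ c : Fin n → ZMod 2, fhat f c * (chi c ones + 1) = 0 := by
    intro c
    by_cases hc : fhat f c = 0
    · rw [hc, zero_mul]
    · have h1 := fhat_eigen f hf c
      have h2 : (n : ℤ) - 2 * (hammingNorm c : ℤ) = 0 := by
        rcases mul_eq_zero.1 h1 with h | h
        · exact h
        · exact absurd h hc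
      have h3 : n = 2 * hammingNorm c := by exact_mod_cast sub_eq_zero.1 h2
      have h4 : Odd (hammingNorm c) := by
        rcases Nat.even_or_odd (hammingNorm c) with he | he
        · exfalso
          obtain ⟨k, hk⟩ := he
          omega
        · exact he
      have h5 : chi c ones = -1 := by
        unfold chi
        simp_rw [ho, mul_one]
        rw [prod_ee, h4.neg_one_pow]
      rw [h5]
      simp
  have h6 : (2:ℤ) ^ n * (f (x + ones) + f x) = 0 := by
    rw [mul_add, ← inversion f (x + ones), ← inversion f x, ← Finset.sum_add_distrib]
    rw [show (∑ c, (fhat f c * chi c (x + ones) + fhat f c * chi c x)) =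
        ∑ c, chi c x * (fhat f c * (chi c ones + 1)) by
      refine Finset.sum_congr rfl fun c _ => ?_
      rw [chi_add_right]; ring]
    simp_rw [key, mul_zero, Finset.sum_const_zero]
  have h7 : f (x + ones) + f x = 0 := by
    have : (2:ℤ) ^ n ≠ 0 := by positivity
    exact (mul_eq_zero.1 h6).resolve_left this
  linarith




lemma norm_cast2 (z : Fin n → ZMod 2) : ((hammingNorm z : ℕ) : ZMod 2) = ∑ i, z i := by
  rw [hammingNorm, ← Finset.sum_filter_ne_zero univ]
  rw [Finset.sum_congr rfl (fun i hi => zmod2_ne_zero (Finset.mem_filter.1 hi).2)]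
  simp

lemma norm_single (i : Fin n) : hammingNorm ((Pi.single i 1 : Fin n → ZMod 2)) = 1 := by
  rw [hammingNorm]
  have : (univ.filter fun j => (Pi.single i 1 : Fin n → ZMod 2) j ≠ 0) = {i} := by
    ext j
    simp only [mem_filter, mem_univ, true_and, mem_singleton]
    constructor
    · intro h
      by_contra hj
      exact h (Pi.single_eq_of_ne hj 1)
    · intro h; subst h; simp
  rw [this, card_singleton]

lemma parity_flip {x : Fin n → ZMod 2} (hx : Even (hammingNorm x)) (i : Fin n) :
    ¬ Even (hammingNorm (x + (Pi.single i 1 : Fin n → ZMod 2))) := by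
  intro h
  have c1 : ((hammingNorm (x + (Pi.single i 1 : Fin n → ZMod 2)) : ℕ) : ZMod 2) = 0 := by
    rw [ZMod.natCast_eq_zero_iff]
    exact h.two_dvd
  have c2 : ((hammingNorm x : ℕ) : ZMod 2) = 0 := by
    rw [ZMod.natCast_eq_zero_iff]
    exact hx.two_dvd
  rw [norm_cast2] at c1 c2
  have c3 : ((hammingNorm ((Pi.single i 1 : Fin n → ZMod 2)) : ℕ) : ZMod 2) = 1 := by
    rw [norm_single]; rfl
  rw [norm_cast2] at c3
  simp_rw [Pi.add_apply, Finset.sum_add_distrib, c2, zero_add] at c1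
  rw [c1] at c3
  exact one_ne_zero c3.symm

lemma dist_add_single (x : Fin n → ZMod 2) (e : Fin n → ZMod 2) :
    hammingDist x (x + e) = hammingNorm e := by
  rw [hammingDist_eq_hammingNorm]
  congr 1
  funext j
  simp only [Pi.sub_apply, Pi.add_apply, Pi.neg_apply]
  have : ∀ a b : ZMod 2, -a + (a + b) = b := by decide
  exact this _ _

lemma sphere_eq_image (x : Fin n → ZMod 2) :
    (univ.filter fun y => hammingDist x y = 1)
      = univ.image (fun i : Fin n => x + (Pi.single i 1 : Fin n → ZMod 2)) := by
  ext y
  simp only [mem_filter, mem_univ, true_and, mem_image]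
  constructor
  · intro h
    rw [hammingDist_eq_hammingNorm, hammingNorm] at h
    rw [show -x + y = x - y from funext fun k => by
      simp only [Pi.add_apply, Pi.neg_apply, Pi.sub_apply]
      generalize x k = a; generalize y k = b; revert a b; decide] at h
    obtain ⟨i, hi⟩ := Finset.card_eq_one.1 h
    refine ⟨i, ?_⟩
    funext j
    by_cases hj : j = i
    · subst hj
      have hmem : j ∈ (univ.filter fun k => (x - y) k ≠ 0) := by rw [hi]; exact mem_singleton_self j
      have := (mem_filter.1 hmem).2
      have h1 : (x - y) j = 1 := zmod2_ne_zero this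
      have : ∀ a b : ZMod 2, a - b = 1 → a + 1 = b := by decide
      simpa [Pi.single_eq_same] using this _ _ h1
    · have hnmem : j ∉ (univ.filter fun k => (x - y) k ≠ 0) := by
        rw [hi]; simp [hj]
      have h0 : (x - y) j = 0 := by
        by_contra hc
        exact hnmem (mem_filter.2 ⟨mem_univ j, hc⟩)
      have : ∀ a b : ZMod 2, a - b = 0 → a + 0 = b := by decide
      simpa [Pi.single_eq_of_ne hj] using this _ _ h0
  · rintro ⟨i, rfl⟩
    rw [dist_add_single, norm_single]

lemma image_inj (x : Fin n → ZMod 2) :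
    Set.InjOn (fun i : Fin n => x + (Pi.single i 1 : Fin n → ZMod 2)) (univ : Finset (Fin n)) := by
  intro i _ j _ h
  simp only at h
  have h2 : (Pi.single i 1 : Fin n → ZMod 2) = Pi.single j 1 := by
    have := congrArg (fun z => z - x) h
    simpa [add_sub_cancel_left] using this
  by_contra hij
  have := congrFun h2 i
  rw [Pi.single_eq_same, Pi.single_eq_of_ne hij] at this
  exact one_ne_zero this


end Stmt4Aux

/-- For n ≡ 2 (mod 4), the two mates of an extended 1-perfect trade
of length n are complements of each other. -/
theorem stmt_4 (n : ℕ) (hn : n % 4 = 2) (T₀ T₁ : Finset (Fin n → ZMod 2))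
    (hT : IsExtTrade T₀ T₁) :
    T₀ = T₁.image (fun x => x + fun _ => (1 : ZMod 2)) := by
  classical
  open Finset Stmt4Aux in
  obtain ⟨-, -, hdisj, heven, hodd⟩ := hT
  set f : (Fin n → ZMod 2) → ℤ :=
    fun y => (if y ∈ T₀ then (1:ℤ) else 0) - (if y ∈ T₁ then 1 else 0) with hfdef
  have fzero : ∀ y : Fin n → ZMod 2, ¬ Even (hammingNorm y) → f y = 0 := by
    intro y hy
    have h0 : y ∉ T₀ := fun h => hy (heven y (Finset.mem_union_left _ h))
    have h1 : y ∉ T₁ := fun h => hy (heven y (Finset.mem_union_right _ h))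
    simp [hfdef, h0, h1]
  have hf : ∀ x : Fin n → ZMod 2, ∑ i, f (x + (Pi.single i 1 : Fin n → ZMod 2)) = 0 := by
    intro x
    by_cases hx : Even (hammingNorm x)
    · refine Finset.sum_eq_zero fun i _ => ?_
      exact fzero _ (parity_flip hx i)
    · have hxo : Odd (hammingNorm x) := Nat.odd_iff.2 (by
        rcases Nat.even_or_odd (hammingNorm x) with h | h
        · exact absurd h hx
        · exact Nat.odd_iff.1 h)
      have hsum : ∑ i, f (x + (Pi.single i 1 : Fin n → ZMod 2))
          = ∑ y ∈ univ.filter (fun y => hammingDist x y = 1), f y := by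
        rw [sphere_eq_image x, Finset.sum_image]
        intro i hi j hj h
        exact image_inj x hi hj h
      rw [hsum]
      have e0 : ∑ y ∈ univ.filter (fun y => hammingDist x y = 1), (if y ∈ T₀ then (1:ℤ) else 0)
          = ((T₀.filter fun y => hammingDist x y = 1).card : ℤ) := by
        rw [Finset.sum_boole]
        congr 1
        congr 1
        ext a
        simp only [Finset.mem_filter, Finset.mem_univ, true_and]
        exact and_comm
      have e1 : ∑ y ∈ univ.filter (fun y => hammingDist x y = 1), (if y ∈ T₁ then (1:ℤ) else 0)
          = ((T₁.filter fun y => hammingDist x y = 1).card : ℤ) := by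
        rw [Finset.sum_boole]
        congr 1
        congr 1
        ext a
        simp only [Finset.mem_filter, Finset.mem_univ, true_and]
        exact and_comm
      rw [hfdef]
      rw [Finset.sum_sub_distrib, e0, e1, (hodd x hxo).1, sub_self]
  have hneg := harmonic_neg hn f hf
  have fT0 : ∀ y : Fin n → ZMod 2, y ∈ T₀ → f y = 1 := by
    intro y hy
    have : y ∉ T₁ := Finset.disjoint_left.1 hdisj hy
    simp [hfdef, hy, this]
  have fT1 : ∀ y : Fin n → ZMod 2, y ∈ T₁ → f y = -1 := by
    intro y hy
    have : y ∉ T₀ := Finset.disjoint_right.1 hdisj hy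
    simp [hfdef, hy, this]
  have fval0 : ∀ y : Fin n → ZMod 2, f y = 1 → y ∈ T₀ := by
    intro y hy
    by_contra h
    by_cases h1 : y ∈ T₁ <;> simp [hfdef, h, h1] at hy
  have fval1 : ∀ y : Fin n → ZMod 2, f y = -1 → y ∈ T₁ := by
    intro y hy
    by_contra h
    by_cases h0 : y ∈ T₀ <;> simp [hfdef, h, h0] at hy
  have hoo : ∀ y : Fin n → ZMod 2, (y + fun _ => (1:ZMod 2)) + (fun _ => (1:ZMod 2)) = y := by
    intro y
    rw [add_assoc]
    have : ((fun _ => (1:ZMod 2)) + fun _ => (1:ZMod 2) : Fin n → ZMod 2) = 0 := by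
      funext i; exact (by decide : (1:ZMod 2) + 1 = 0)
    rw [this, add_zero]
  ext y
  simp only [Finset.mem_image]
  constructor
  · intro hy
    refine ⟨y + fun _ => (1:ZMod 2), ?_, hoo y⟩
    apply fval1
    rw [hneg y, fT0 y hy]
  · rintro ⟨a, ha, rfl⟩
    apply fval0
    rw [hneg a, fT1 a ha]
    norm_num
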